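/- Suppose P ∈ ℂ^{n×n} is a Hermitian positive definite solution of the anti-Riccati equation −Q = A₂^H P^# A₂ − A₂^H P^# B₂ (R + B₂^H P^# B₂)^{-1} B₂^H P^# A₂ − P, and set K₁* = −(R + B₂^H P^# B₂)^{-1} B₂^H P^# A₂. Then: (i) every solution of the closed-loop system x(k+1) = (A₂ + B₂K₁*)^# x^#(k) converges to 0; (ii) for every initial condition x₀ and every control sequence u, J(u) ≥ x₀^H P x₀, and the feedback control u(k) = K₁* x(k) achieves J(u) = x₀^H P x₀. -/

import Mathlib

open Matrix Filter Topology
open scoped ENNReal ComplexOrder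

set_option linter.unusedSectionVars false
set_option maxHeartbeats 1000000

noncomputable section

/-- Entrywise complex conjugate of a matrix, `M^#`. -/
def mconj {k l : Type*} (A : Matrix k l ℂ) : Matrix k l ℂ := A.map (starRingEnd ℂ)

variable {n m : ℕ}

/-- The antilinear system `x(k+1) = A₂^# x^#(k) + B₂^# u^#(k)` is stabilizable if some
feedback `u(k) = K₁x(k) + K₂^#x^#(k)` drives every closed-loop solution to zero. -/
def AntiStabilizable (A₂ : Matrix (Fin n) (Fin n) ℂ) (B₂ : Matrix (Fin n) (Fin m) ℂ) :
    Prop :=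
  ∃ K₁ K₂ : Matrix (Fin m) (Fin n) ℂ, ∀ x : ℕ → (Fin n → ℂ),
    (∀ k : ℕ, x (k + 1) =
        mconj A₂ *ᵥ star (x k) + mconj B₂ *ᵥ star (K₁ *ᵥ x k + mconj K₂ *ᵥ star (x k))) →
    Tendsto x atTop (𝓝 0)

/-- The trajectory of the antilinear system `x(k+1) = A₂^# x^#(k) + B₂^# u^#(k)` from
the initial condition `x₀` under the control sequence `u`. -/
def atraj (A₂ : Matrix (Fin n) (Fin n) ℂ) (B₂ : Matrix (Fin n) (Fin m) ℂ)
    (x₀ : Fin n → ℂ) (u : ℕ → Fin m → ℂ) : ℕ → Fin n → ℂ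
  | 0 => x₀
  | k + 1 => mconj A₂ *ᵥ star (atraj A₂ B₂ x₀ u k) + mconj B₂ *ᵥ star (u k)

/-- The quadratic cost `J = Σ_k (x(k)^H Q x(k) + u(k)^H R u(k))`, valued in `[0,∞]`. -/
def cost (Q : Matrix (Fin n) (Fin n) ℂ) (R : Matrix (Fin m) (Fin m) ℂ)
    (x : ℕ → Fin n → ℂ) (u : ℕ → Fin m → ℂ) : ℝ≥0∞ :=
  ∑' k : ℕ, ENNReal.ofReal ((star (x k) ⬝ᵥ (Q *ᵥ x k)).re + (star (u k) ⬝ᵥ (R *ᵥ u k)).re)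

/-- The LQR problem for the antilinear system is solvable: for every initial condition
there is a control of finite cost minimizing the cost. -/
def LQRSolvable (A₂ : Matrix (Fin n) (Fin n) ℂ) (B₂ : Matrix (Fin n) (Fin m) ℂ)
    (Q : Matrix (Fin n) (Fin n) ℂ) (R : Matrix (Fin m) (Fin m) ℂ) : Prop :=
  ∀ x₀ : Fin n → ℂ, ∃ u : ℕ → Fin m → ℂ,
    cost Q R (atraj A₂ B₂ x₀ u) u < ⊤ ∧
    ∀ u' : ℕ → Fin m → ℂ, cost Q R (atraj A₂ B₂ x₀ u) u ≤ cost Q R (atraj A₂ B₂ x₀ u') u'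

/-- The anti-Riccati equation
`-Q = A₂^H P^# A₂ - A₂^H P^# B₂ (R + B₂^H P^# B₂)⁻¹ B₂^H P^# A₂ - P`. -/
def AntiRiccati (A₂ : Matrix (Fin n) (Fin n) ℂ) (B₂ : Matrix (Fin n) (Fin m) ℂ)
    (Q : Matrix (Fin n) (Fin n) ℂ) (R : Matrix (Fin m) (Fin m) ℂ)
    (P : Matrix (Fin n) (Fin n) ℂ) : Prop :=
  -Q = A₂ᴴ * mconj P * A₂ -
      A₂ᴴ * mconj P * B₂ * (R + B₂ᴴ * mconj P * B₂)⁻¹ * (B₂ᴴ * mconj P * A₂) - P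

section helpers
variable {a b c : Type*} [Fintype a] [Fintype b] [Fintype c]

lemma mconj_mulVec_star (M : Matrix a b ℂ) (v : b → ℂ) :
    mconj M *ᵥ star v = star (M *ᵥ v) := by
  funext i
  simp [mconj, Matrix.mulVec, dotProduct, star_sum, map_sum]

lemma dp1 (C : Matrix a b ℂ) (M : Matrix a c ℂ) (v : b → ℂ) (w : c → ℂ) :
    star (C *ᵥ v) ⬝ᵥ (M *ᵥ w) = star v ⬝ᵥ ((Cᴴ * M) *ᵥ w) := by
  rw [star_mulVec, Matrix.dotProduct_mulVec, vecMul_vecMul, ← Matrix.dotProduct_mulVec]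

lemma re_star_quad (P : Matrix a a ℂ) (z : a → ℂ) :
    (star (star z) ⬝ᵥ (P *ᵥ star z)).re = (star z ⬝ᵥ (mconj P *ᵥ z)).re := by
  have h : star (star z) ⬝ᵥ (P *ᵥ star z) = star (star z ⬝ᵥ (mconj P *ᵥ z)) := by
    simp [mconj, dotProduct, Matrix.mulVec, star_sum, Finset.mul_sum, mul_comm,
      mul_left_comm, mul_assoc]
  rw [h]
  simp [Complex.star_def]

lemma quad_cont' (M : Matrix a a ℂ) : Continuous fun v : a → ℂ => (star v ⬝ᵥ (M *ᵥ v)).re := by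
  apply Complex.continuous_re.comp
  simp only [dotProduct, Matrix.mulVec]
  fun_prop

end helpers

lemma key_ptwise {n m : Type*} [Fintype n] [Fintype m]
    (A : Matrix n n ℂ) (B : Matrix n m ℂ) (Q P N : Matrix n n ℂ) (R S : Matrix m m ℂ)
    (K : Matrix m n ℂ)
    (h1 : Q + Aᴴ * (N * A) - P = Kᴴ * (S * K))
    (h2 : Aᴴ * (N * B) = -(Kᴴ * S))
    (h3 : Bᴴ * (N * A) = -(S * K))
    (h4 : R + Bᴴ * (N * B) = S)
    (x : n → ℂ) (u : m → ℂ) :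
    star x ⬝ᵥ (Q *ᵥ x) + star u ⬝ᵥ (R *ᵥ u) +
      star (A *ᵥ x + B *ᵥ u) ⬝ᵥ (N *ᵥ (A *ᵥ x + B *ᵥ u)) =
    star x ⬝ᵥ (P *ᵥ x) + star (u - K *ᵥ x) ⬝ᵥ (S *ᵥ (u - K *ᵥ x)) := by
  have e1 := congrArg (fun M => star x ⬝ᵥ (M *ᵥ x)) h1
  have e2 := congrArg (fun M => star x ⬝ᵥ (M *ᵥ u)) h2
  have e3 := congrArg (fun M => star u ⬝ᵥ (M *ᵥ x)) h3
  have e4 := congrArg (fun M => star u ⬝ᵥ (M *ᵥ u)) h4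
  simp only [Matrix.add_mulVec, Matrix.sub_mulVec, Matrix.neg_mulVec, dotProduct_add,
    dotProduct_sub, dotProduct_neg] at e1 e2 e3 e4
  simp only [star_add, star_sub, Matrix.mulVec_add, Matrix.mulVec_sub, add_dotProduct,
    sub_dotProduct, dotProduct_add, dotProduct_sub, Matrix.mulVec_mulVec,
    dp1, Matrix.mul_assoc]
  try simp only [Matrix.mul_assoc] at e1 e2 e3 e4
  linear_combination e1 + e2 + e3 + e4

lemma posdef_lower {n : ℕ} {Q : Matrix (Fin n) (Fin n) ℂ} (hQ : Q.PosDef) :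
    ∃ ε : ℝ, 0 < ε ∧ ∀ x : Fin n → ℂ, ε * ‖x‖ ^ 2 ≤ (star x ⬝ᵥ (Q *ᵥ x)).re := by
  rcases Nat.eq_zero_or_pos n with h0 | hn
  · subst h0
    refine ⟨1, one_pos, fun x => ?_⟩
    have hx : x = 0 := funext fun i => i.elim0
    have h0 : ‖x‖ = 0 := by rw [hx]; exact norm_zero
    rw [one_mul, h0]
    simp [hx]
  · haveI : Nonempty (Fin n) := ⟨⟨0, hn⟩⟩
    have hcs : IsCompact (Metric.sphere (0 : Fin n → ℂ) 1) := isCompact_sphere _ _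
    have hne : (Metric.sphere (0 : Fin n → ℂ) 1).Nonempty :=
      NormedSpace.sphere_nonempty.2 zero_le_one
    obtain ⟨z, hzs, hmin⟩ := hcs.exists_isMinOn hne (quad_cont' Q).continuousOn
    have hz1 : ‖z‖ = 1 := by simpa using hzs
    have hz0 : z ≠ 0 := fun h => by simp [h] at hz1
    refine ⟨(star z ⬝ᵥ (Q *ᵥ z)).re, ?_, fun x => ?_⟩
    · simpa using hQ.re_dotProduct_pos hz0
    · by_cases hx : x = 0
      · simp [hx]
      · set t : ℝ := ‖x‖ with ht
        have ht0 : 0 < t := norm_pos_iff.2 hx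
        set y : Fin n → ℂ := ((t : ℂ))⁻¹ • x with hy
        have hyx : x = (t : ℂ) • y := by
          rw [hy, smul_smul, mul_inv_cancel₀ (by exact_mod_cast ht0.ne'), one_smul]
        have hys : y ∈ Metric.sphere (0 : Fin n → ℂ) 1 := by
          simp only [Metric.mem_sphere, dist_zero_right, hy]
          rw [norm_smul]
          simp only [norm_inv, Complex.norm_real, Real.norm_eq_abs, abs_of_pos ht0]
          field_simp
          exact ht.symm
        have hq : star x ⬝ᵥ (Q *ᵥ x) = ((t ^ 2 : ℝ) : ℂ) * (star y ⬝ᵥ (Q *ᵥ y)) := by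
          rw [hyx, star_smul, Matrix.mulVec_smul, smul_dotProduct,
            dotProduct_smul]
          simp [smul_smul]
          ring
        have hzy : (star z ⬝ᵥ (Q *ᵥ z)).re ≤ (star y ⬝ᵥ (Q *ᵥ y)).re := hmin hys
        calc (star z ⬝ᵥ (Q *ᵥ z)).re * ‖x‖ ^ 2 ≤ (star y ⬝ᵥ (Q *ᵥ y)).re * t ^ 2 := by
              rw [← ht]; exact mul_le_mul_of_nonneg_right hzy (sq_nonneg t)
          _ = (star x ⬝ᵥ (Q *ᵥ x)).re := by
              rw [hq, Complex.re_ofReal_mul]; ring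

/-- If `P > 0` solves the anti-Riccati equation and
`K₁* = -(R + B₂^H P^# B₂)⁻¹ B₂^H P^# A₂`, then the closed-loop system
`x(k+1) = (A₂ + B₂K₁*)^# x^#(k)` is asymptotically stable, every control has cost at
least `x₀^H P x₀`, and the feedback `u(k) = K₁* x(k)` attains this cost. -/
theorem antiRiccati_posDef_optimal
    (A₂ : Matrix (Fin n) (Fin n) ℂ) (B₂ : Matrix (Fin n) (Fin m) ℂ)
    (Q : Matrix (Fin n) (Fin n) ℂ) (R : Matrix (Fin m) (Fin m) ℂ)
    (hQ : Q.PosDef) (hR : R.PosDef)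
    (P : Matrix (Fin n) (Fin n) ℂ) (hP : P.PosDef) (heq : AntiRiccati A₂ B₂ Q R P)
    (K : Matrix (Fin m) (Fin n) ℂ)
    (hK : K = -((R + B₂ᴴ * mconj P * B₂)⁻¹ * (B₂ᴴ * mconj P * A₂))) :
    (∀ x : ℕ → Fin n → ℂ,
        (∀ k : ℕ, x (k + 1) = mconj (A₂ + B₂ * K) *ᵥ star (x k)) →
        Tendsto x atTop (𝓝 0)) ∧
    ∀ x₀ : Fin n → ℂ,
      (∀ u : ℕ → Fin m → ℂ,
          ENNReal.ofReal (star x₀ ⬝ᵥ (P *ᵥ x₀)).re ≤ cost Q R (atraj A₂ B₂ x₀ u) u) ∧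
      (∀ u : ℕ → Fin m → ℂ, (∀ k : ℕ, u k = K *ᵥ atraj A₂ B₂ x₀ u k) →
          cost Q R (atraj A₂ B₂ x₀ u) u = ENNReal.ofReal (star x₀ ⬝ᵥ (P *ᵥ x₀)).re) := by
  classical
  unfold AntiRiccati at heq
  set S : Matrix (Fin m) (Fin m) ℂ := R + B₂ᴴ * mconj P * B₂ with hSdef
  have hmP : mconj P = Pᵀ := by
    ext i j
    simpa [mconj, Matrix.conjTranspose_apply] using congrFun (congrFun hP.1 j) i
  have hN : (mconj P).PosDef := hmP ▸ hP.transpose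
  have hNH : (mconj P)ᴴ = mconj P := hN.1
  have hS : S.PosDef := by
    rw [hSdef]; exact hR.add_posSemidef (hN.posSemidef.conjTranspose_mul_mul_same B₂)
  have hSH : Sᴴ = S := hS.1
  have hdet : IsUnit S.det := (Matrix.isUnit_iff_isUnit_det S).mp hS.isUnit
  have hSS : S * S⁻¹ = 1 := Matrix.mul_nonsing_inv S hdet
  have hSiS : S⁻¹ * S = 1 := Matrix.nonsing_inv_mul S hdet
  have hSiH : S⁻¹ᴴ = S⁻¹ := by rw [Matrix.conjTranspose_nonsing_inv, hSH]
  have hc1 : ∀ M : Matrix (Fin m) (Fin n) ℂ, S * (S⁻¹ * M) = M := fun M => by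
    rw [← Matrix.mul_assoc, hSS, Matrix.one_mul]
  have hc2 : ∀ M : Matrix (Fin m) (Fin n) ℂ, S⁻¹ * (S * M) = M := fun M => by
    rw [← Matrix.mul_assoc, hSiS, Matrix.one_mul]
  have h3 : B₂ᴴ * (mconj P * A₂) = -(S * K) := by
    rw [hK]
    simp only [Matrix.mul_neg, neg_neg, hc1, Matrix.mul_assoc]
  have h2 : A₂ᴴ * (mconj P * B₂) = -(Kᴴ * S) := by
    rw [hK]
    simp only [Matrix.conjTranspose_neg, Matrix.conjTranspose_mul, hSiH, hNH,
      Matrix.conjTranspose_conjTranspose, Matrix.neg_mul, neg_neg, Matrix.mul_assoc, hSiS,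
      Matrix.mul_one]
  have h1 : Q + A₂ᴴ * (mconj P * A₂) - P = Kᴴ * (S * K) := by
    have hQw := neg_eq_iff_eq_neg.mp heq
    rw [hQw, hK]
    simp only [Matrix.conjTranspose_neg, Matrix.conjTranspose_mul, hSiH, hNH,
      Matrix.conjTranspose_conjTranspose, Matrix.neg_mul, Matrix.mul_neg, neg_neg,
      Matrix.mul_assoc, hc1, hc2, hSiS, Matrix.mul_one]
    abel
  have h4 : R + B₂ᴴ * (mconj P * B₂) = S := by rw [hSdef, Matrix.mul_assoc]
  have key := fun (x : Fin n → ℂ) (u : Fin m → ℂ) =>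
    key_ptwise A₂ B₂ Q P (mconj P) R S K h1 h2 h3 h4 x u
  -- step identity along trajectories
  have hx1 : ∀ (x₀ : Fin n → ℂ) (u : ℕ → Fin m → ℂ) (k : ℕ),
      atraj A₂ B₂ x₀ u (k + 1) = star (A₂ *ᵥ atraj A₂ B₂ x₀ u k + B₂ *ᵥ u k) := by
    intro x₀ u k
    show mconj A₂ *ᵥ star (atraj A₂ B₂ x₀ u k) + mconj B₂ *ᵥ star (u k) = _
    rw [mconj_mulVec_star, mconj_mulVec_star, star_add]
  have hstep : ∀ (x₀ : Fin n → ℂ) (u : ℕ → Fin m → ℂ) (k : ℕ),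
      (star (atraj A₂ B₂ x₀ u k) ⬝ᵥ (Q *ᵥ atraj A₂ B₂ x₀ u k)).re
        + (star (u k) ⬝ᵥ (R *ᵥ u k)).re
      = (star (atraj A₂ B₂ x₀ u k) ⬝ᵥ (P *ᵥ atraj A₂ B₂ x₀ u k)).re
        - (star (atraj A₂ B₂ x₀ u (k + 1)) ⬝ᵥ (P *ᵥ atraj A₂ B₂ x₀ u (k + 1))).re
        + (star (u k - K *ᵥ atraj A₂ B₂ x₀ u k)
            ⬝ᵥ (S *ᵥ (u k - K *ᵥ atraj A₂ B₂ x₀ u k))).re := by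
    intro x₀ u k
    have hre := congrArg Complex.re (key (atraj A₂ B₂ x₀ u k) (u k))
    simp only [Complex.add_re] at hre
    have hV : (star (atraj A₂ B₂ x₀ u (k + 1)) ⬝ᵥ (P *ᵥ atraj A₂ B₂ x₀ u (k + 1))).re
        = (star (A₂ *ᵥ atraj A₂ B₂ x₀ u k + B₂ *ᵥ u k)
            ⬝ᵥ (mconj P *ᵥ (A₂ *ᵥ atraj A₂ B₂ x₀ u k + B₂ *ᵥ u k))).re := by
      rw [hx1 x₀ u k]
      exact re_star_quad P _
    linarith [hre, hV]
  -- the main per-trajectory facts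
  have main : ∀ (x₀ : Fin n → ℂ) (u : ℕ → Fin m → ℂ),
      (ENNReal.ofReal (star x₀ ⬝ᵥ (P *ᵥ x₀)).re ≤ cost Q R (atraj A₂ B₂ x₀ u) u) ∧
      (cost Q R (atraj A₂ B₂ x₀ u) u ≠ ⊤ → Tendsto (atraj A₂ B₂ x₀ u) atTop (𝓝 0)) ∧
      ((∀ k, u k = K *ᵥ atraj A₂ B₂ x₀ u k) →
        cost Q R (atraj A₂ B₂ x₀ u) u ≤ ENNReal.ofReal (star x₀ ⬝ᵥ (P *ᵥ x₀)).re) := by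
    intro x₀ u
    set x : ℕ → Fin n → ℂ := atraj A₂ B₂ x₀ u with hxdef
    set c : ℕ → ℝ := fun k =>
      (star (x k) ⬝ᵥ (Q *ᵥ x k)).re + (star (u k) ⬝ᵥ (R *ᵥ u k)).re with hcdef
    set V : ℕ → ℝ := fun k => (star (x k) ⬝ᵥ (P *ᵥ x k)).re with hVdef
    set d : ℕ → ℝ := fun k =>
      (star (u k - K *ᵥ x k) ⬝ᵥ (S *ᵥ (u k - K *ᵥ x k))).re with hddef
    have hstep' : ∀ k, c k = V k - V (k + 1) + d k := fun k => hstep x₀ u k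
    have hcost : cost Q R x u = ∑' k, ENNReal.ofReal (c k) := rfl
    have hV00 : V 0 = (star x₀ ⬝ᵥ (P *ᵥ x₀)).re := rfl
    have hc0 : ∀ k, 0 ≤ c k := fun k => by
      have a1 := hQ.posSemidef.re_dotProduct_nonneg (x k)
      have a2 := hR.posSemidef.re_dotProduct_nonneg (u k)
      simp only [RCLike.re_to_complex] at a1 a2
      exact add_nonneg a1 a2
    have hd0 : ∀ k, 0 ≤ d k := fun k => by
      have a := hS.posSemidef.re_dotProduct_nonneg (u k - K *ᵥ x k)
      simp only [RCLike.re_to_complex] at a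
      exact a
    have hV0 : ∀ k, 0 ≤ V k := fun k => by
      have a := hP.posSemidef.re_dotProduct_nonneg (x k)
      simp only [RCLike.re_to_complex] at a
      exact a
    have htel : ∀ N : ℕ, ∑ k ∈ Finset.range N, c k
        = V 0 - V N + ∑ k ∈ Finset.range N, d k := by
      intro N
      induction N with
      | zero => simp
      | succ N ih =>
        rw [Finset.sum_range_succ, Finset.sum_range_succ, ih, hstep' N]
        ring
    have hsum' : cost Q R x u ≠ ⊤ → Summable c := by
      intro hne
      rw [hcost] at hne
      have h1 := ENNReal.summable_toReal hne
      exact h1.congr fun k => ENNReal.toReal_ofReal (hc0 k)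
    have htendx : Summable c → Tendsto x atTop (𝓝 0) := by
      intro hsum
      obtain ⟨ε, hε, hεle⟩ := posdef_lower hQ
      have hcl := hsum.tendsto_atTop_zero
      have hqq : Tendsto (fun k => (star (x k) ⬝ᵥ (Q *ᵥ x k)).re) atTop (𝓝 0) := by
        refine squeeze_zero (fun k => ?_) (fun k => ?_) hcl
        · have := hQ.posSemidef.re_dotProduct_nonneg (x k); simpa using this
        · have a2 := hR.posSemidef.re_dotProduct_nonneg (u k)
          simp only [RCLike.re_to_complex] at a2
          show _ ≤ c k
          rw [hcdef]
          simp only []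
          linarith
      have hns : Tendsto (fun k => ‖x k‖ ^ 2) atTop (𝓝 0) := by
        have hlim : Tendsto (fun k => ε⁻¹ * (star (x k) ⬝ᵥ (Q *ᵥ x k)).re) atTop (𝓝 0) := by
          have := hqq.const_mul ε⁻¹
          simpa using this
        refine squeeze_zero (fun k => sq_nonneg _) (fun k => ?_) hlim
        have h := mul_le_mul_of_nonneg_left (hεle (x k)) (le_of_lt (inv_pos.2 hε))
        rwa [← mul_assoc, inv_mul_cancel₀ hε.ne', one_mul] at h
      have hnorm : Tendsto (fun k => ‖x k‖) atTop (𝓝 0) := by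
        have hcomp := (Real.continuous_sqrt.tendsto 0).comp hns
        rw [Real.sqrt_zero] at hcomp
        have heq2 : ∀ k, Real.sqrt (‖x k‖ ^ 2) = ‖x k‖ := fun k =>
          Real.sqrt_sq (norm_nonneg (x k))
        exact Tendsto.congr (fun k => heq2 k) hcomp
      exact tendsto_zero_iff_norm_tendsto_zero.mpr hnorm
    refine ⟨?_, ?_, ?_⟩
    · -- lower bound
      by_cases htop : cost Q R x u = ⊤
      · rw [htop]; exact le_top
      · have hsum := hsum' htop
        have hx0 := htendx hsum
        have hVlim : Tendsto V atTop (𝓝 0) := by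
          have hc := ((quad_cont' P).tendsto (0 : Fin n → ℂ)).comp hx0
          simp only [Function.comp_def, mulVec_zero, dotProduct_zero, Complex.zero_re] at hc
          exact hc
        have hps : Tendsto (fun N => ∑ k ∈ Finset.range N, c k) atTop (𝓝 (∑' k, c k)) :=
          hsum.hasSum.tendsto_sum_nat
        have hineq : ∀ N, V 0 - V N ≤ ∑ k ∈ Finset.range N, c k := fun N => by
          rw [htel N]
          have := Finset.sum_nonneg (fun k (_ : k ∈ Finset.range N) => hd0 k)
          linarith
        have hlim : V 0 ≤ ∑' k, c k := by
          have h2 : Tendsto (fun N => V 0 - V N) atTop (𝓝 (V 0)) := by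
            simpa using tendsto_const_nhds.sub hVlim
          exact le_of_tendsto_of_tendsto' h2 hps hineq
        rw [hcost, ← ENNReal.ofReal_tsum_of_nonneg hc0 hsum, ← hV00]
        exact ENNReal.ofReal_le_ofReal hlim
    · -- finiteness implies convergence
      intro hne
      exact htendx (hsum' hne)
    · -- upper bound for the feedback control
      intro hu
      have hdz : ∀ k, d k = 0 := fun k => by
        rw [hddef]
        simp only []
        rw [hu k]
        simp
      have hub : ∀ N, ∑ k ∈ Finset.range N, c k ≤ V 0 := fun N => by
        rw [htel N]
        simp only [hdz, Finset.sum_const_zero]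
        linarith [hV0 N]
      rw [hcost, ENNReal.tsum_eq_iSup_nat]
      refine iSup_le fun N => ?_
      calc ∑ k ∈ Finset.range N, ENNReal.ofReal (c k)
          = ENNReal.ofReal (∑ k ∈ Finset.range N, c k) :=
            (ENNReal.ofReal_sum_of_nonneg (fun k _ => hc0 k)).symm
        _ ≤ ENNReal.ofReal (V 0) := ENNReal.ofReal_le_ofReal (hub N)
        _ = _ := by rw [hV00]
  refine ⟨?_, fun x₀ => ⟨fun u => (main x₀ u).1,
    fun u hu => le_antisymm ((main x₀ u).2.2 hu) ((main x₀ u).1)⟩⟩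
  -- closed-loop stability
  intro x hcl
  set u : ℕ → Fin m → ℂ := fun k => K *ᵥ x k with hudef
  have hmc : ∀ v : Fin n → ℂ, mconj (A₂ + B₂ * K) *ᵥ star v
      = mconj A₂ *ᵥ star v + mconj B₂ *ᵥ star (K *ᵥ v) := by
    intro v
    rw [mconj_mulVec_star, mconj_mulVec_star, mconj_mulVec_star, ← star_add,
      Matrix.add_mulVec, ← Matrix.mulVec_mulVec]
  have hxa : ∀ k, x k = atraj A₂ B₂ (x 0) u k := by
    intro k
    induction k with
    | zero => rfl
    | succ k ih =>
      rw [hcl k, hmc (x k)]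
      show _ = mconj A₂ *ᵥ star (atraj A₂ B₂ (x 0) u k) + mconj B₂ *ᵥ star (u k)
      rw [← ih]
  have hu' : ∀ k, u k = K *ᵥ atraj A₂ B₂ (x 0) u k := fun k => by
    rw [← hxa k]
  have hupper := (main (x 0) u).2.2 hu'
  have hne : cost Q R (atraj A₂ B₂ (x 0) u) u ≠ ⊤ :=
    (lt_of_le_of_lt hupper ENNReal.ofReal_lt_top).ne
  have hx0 := (main (x 0) u).2.1 hne
  exact Tendsto.congr (fun k => (hxa k).symm) hx0
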